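/- For real n×n matrices A, B with A antisymmetric and B symmetric, det(-i(A + iB)) = det(B - iA) is a real number, and if C denotes the antisymmetric matrix [[A,B],[-B,A]] then det(C) = (det(-i(A+iB)))². (Determinantal consequence of the Pfaffian identity Pf(C) = det(-i(A+iB)).) -/
import Mathlib

open Matrix

theorem pfaffian_det_identity (n : ℕ) (A B : Matrix (Fin n) (Fin n) ℝ)
    (hA : Aᵀ = -A) (hB : Bᵀ = B) :
    let A' : Matrix (Fin n) (Fin n) ℂ := A.map (fun x => (x : ℂ))
    let B' : Matrix (Fin n) (Fin n) ℂ := B.map (fun x => (x : ℂ))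
    ((-Complex.I) • (A' + Complex.I • B')).det = (B' - Complex.I • A').det ∧
    (((-Complex.I) • (A' + Complex.I • B')).det).im = 0 ∧
    ((Matrix.fromBlocks A B (-B) A).det : ℂ) =
      (((-Complex.I) • (A' + Complex.I • B')).det) ^ 2 := by
  intro A' B'
  have hA' : A'ᵀ = -A' := by
    ext i j
    simp only [Matrix.transpose_apply, Matrix.neg_apply, A', Matrix.map_apply]
    have := congrFun (congrFun hA i) j
    simp only [Matrix.transpose_apply, Matrix.neg_apply] at this
    exact_mod_cast congrArg (fun x : ℝ => (x : ℂ)) this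
  have hB' : B'ᵀ = B' := by
    ext i j
    simp only [Matrix.transpose_apply, B', Matrix.map_apply]
    have := congrFun (congrFun hB i) j
    simp only [Matrix.transpose_apply] at this
    exact_mod_cast congrArg (fun x : ℝ => (x : ℂ)) this
  have hM : (-Complex.I) • (A' + Complex.I • B') = B' - Complex.I • A' := by
    ext i j
    simp [Matrix.smul_apply, Matrix.add_apply, Matrix.sub_apply]
    ring_nf
    rw [Complex.I_sq]
    ring
  refine ⟨by rw [hM], ?_, ?_⟩
  · -- realness
    rw [hM]
    set M := B' - Complex.I • A' with hMdef
    have hconj : (starRingEnd ℂ) M.det = M.det := by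
      rw [RingHom.map_det, RingHom.mapMatrix_apply]
      have hmap : M.map (starRingEnd ℂ) = Mᵀ := by
        ext i j
        have hAij : A' j i = -A' i j := by
          have := congrFun (congrFun hA' i) j; simpa using this
        have hBij : B' j i = B' i j := by
          have := congrFun (congrFun hB' i) j; simpa using this
        have hAre : (starRingEnd ℂ) (A' i j) = A' i j := by
          simp [A', Matrix.map_apply, Complex.conj_ofReal]
        have hBre : (starRingEnd ℂ) (B' i j) = B' i j := by
          simp [B', Matrix.map_apply, Complex.conj_ofReal]
        simp only [hMdef, Matrix.map_apply, Matrix.sub_apply, Matrix.smul_apply,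
          Matrix.transpose_apply, map_sub, _root_.map_mul, smul_eq_mul,
          Complex.conj_I, hAij, hBij, hAre, hBre]
        ring
      rw [hmap, Matrix.det_transpose]
    exact Complex.conj_eq_iff_im.mp hconj
  · -- determinant identity
    set P : Matrix (Fin n ⊕ Fin n) (Fin n ⊕ Fin n) ℂ :=
      Matrix.fromBlocks 1 (Complex.I • 1) 0 1 with hP
    set E : Matrix (Fin n ⊕ Fin n) (Fin n ⊕ Fin n) ℂ :=
      Matrix.fromBlocks (A' - Complex.I • B') 0 (-B') (A' + Complex.I • B') with hE
    have hCc : ((Matrix.fromBlocks A B (-B) A).map (fun x : ℝ => (x : ℂ)))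
        = Matrix.fromBlocks A' B' (-B') A' := by
      ext (i|i) (j|j) <;> simp [A', B', Matrix.map_apply]
    have hdetP : P.det = 1 := by
      rw [hP, Matrix.det_fromBlocks_zero₂₁]
      simp
    have e11 : (1 : Matrix (Fin n) (Fin n) ℂ) * A' + (Complex.I • 1) * (-B')
        = (A' - Complex.I • B') * 1 + 0 * 0 := by
      simp [Matrix.smul_mul, sub_eq_add_neg]
    have e12 : (1 : Matrix (Fin n) (Fin n) ℂ) * B' + (Complex.I • 1) * A'
        = (A' - Complex.I • B') * (Complex.I • 1) + 0 * 1 := by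
      simp [Matrix.smul_mul, Matrix.mul_smul, smul_sub, smul_smul, Complex.I_mul_I]
      abel
    have e21 : (0 : Matrix (Fin n) (Fin n) ℂ) * A' + 1 * (-B')
        = (-B') * 1 + (A' + Complex.I • B') * 0 := by
      simp
    have e22 : (0 : Matrix (Fin n) (Fin n) ℂ) * B' + 1 * A'
        = (-B') * (Complex.I • 1) + (A' + Complex.I • B') * 1 := by
      simp [Matrix.mul_smul]
    have hcomm : P * Matrix.fromBlocks A' B' (-B') A' = E * P := by
      rw [hP, hE, Matrix.fromBlocks_multiply, Matrix.fromBlocks_multiply,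
        e11, e12, e21, e22]
    have hdetCc : ((Matrix.fromBlocks A B (-B) A).det : ℂ)
        = (A' - Complex.I • B').det * (A' + Complex.I • B').det := by
      have h1 : ((Matrix.fromBlocks A B (-B) A).det : ℂ)
          = (Matrix.fromBlocks A' B' (-B') A').det := by
        rw [← hCc]
        exact RingHom.map_det Complex.ofRealHom _
      have h2 : P.det * (Matrix.fromBlocks A' B' (-B') A').det
          = E.det * P.det := by
        rw [← Matrix.det_mul, ← Matrix.det_mul, hcomm]
      rw [hdetP, one_mul, mul_one] at h2
      rw [h1, h2, hE, Matrix.det_fromBlocks_zero₁₂]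
    have hneg : (A' - Complex.I • B').det = (-1 : ℂ) ^ n * (A' + Complex.I • B').det := by
      have ht : (A' + Complex.I • B')ᵀ = -(A' - Complex.I • B') := by
        rw [Matrix.transpose_add, Matrix.transpose_smul, hA', hB']
        abel
      have h3 : (A' + Complex.I • B').det = (-(A' - Complex.I • B')).det := by
        rw [← ht, Matrix.det_transpose]
      rw [h3, Matrix.det_neg, Fintype.card_fin, ← mul_assoc, ← mul_pow]
      norm_num
    have hpow : ((-Complex.I) ^ n) ^ 2 = (-1 : ℂ) ^ n := by
      rw [← pow_mul, mul_comm, pow_mul]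
      norm_num [Complex.I_sq]
    rw [hdetCc, hneg, Matrix.det_smul, Fintype.card_fin, mul_pow, hpow]
    ring
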